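/- Correctness of the inter-transactions rate proof: let c₁ = ∏_{t∈S₁} cmₜ, c₂ = ∏_{t∈S₂} cmₜ, τ₁ = ∏_{t∈S₁} tkₜ, τ₂ = ∏_{t∈S₂} tkₜ where cmₜ = g^{vₜ} h^{rₜ} and tkₜ = pk^{rₜ}, pk = h^{sk}. If N·(∑_{t∈S₁} vₜ) = D·(∑_{t∈S₂} vₜ), then c := c₁^N · c₂^{−D} = h^{N Σr₁ − D Σr₂} and τ := τ₁^N · τ₂^{−D} satisfy τ = c^{sk}, where Σr₁ = ∑_{t∈S₁} rₜ and Σr₂ = ∑_{t∈S₂} rₜ. -/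

import Mathlib

section Aux
variable {G : Type*} [CommGroup G] {p : ℕ} [NeZero p]

lemma pow_val_add (x : G) (hx : x ^ p = 1) (a b : ZMod p) :
    x ^ (a + b).val = x ^ a.val * x ^ b.val := by
  rw [ZMod.val_add, ← pow_add]
  conv_rhs => rw [← Nat.div_add_mod (a.val + b.val) p]
  rw [pow_add, pow_mul, hx, one_pow, one_mul]

lemma pow_val_sum (x : G) (hx : x ^ p = 1) {ι : Type*} (S : Finset ι) (f : ι → ZMod p) :
    x ^ (∑ t ∈ S, f t).val = ∏ t ∈ S, x ^ (f t).val := by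
  classical
  induction S using Finset.induction with
  | empty => simp
  | insert _ _ hnot ih =>
      rw [Finset.sum_insert hnot, pow_val_add x hx, ih, Finset.prod_insert hnot]

lemma pow_val_neg (x : G) (hx : x ^ p = 1) (a : ZMod p) :
    x ^ (-a).val = (x ^ a.val)⁻¹ := by
  have h1 := pow_val_add x hx a (-a)
  rw [add_neg_cancel] at h1
  simp only [ZMod.val_zero, pow_zero] at h1
  exact (inv_eq_of_mul_eq_one_right h1.symm).symm

lemma pow_val_nsmul (x : G) (hx : x ^ p = 1) (n : ℕ) (a : ZMod p) :
    x ^ ((n • a).val) = (x ^ a.val) ^ n := by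
  induction n with
  | zero => simp
  | succ n ih => rw [succ_nsmul, pow_val_add x hx, ih, pow_succ]

lemma pow_val_zsmul (x : G) (hx : x ^ p = 1) (n : ℤ) (a : ZMod p) :
    x ^ ((n • a).val) = (x ^ a.val) ^ n := by
  cases n with
  | ofNat m => simpa using pow_val_nsmul x hx m a
  | negSucc m => rw [negSucc_zsmul, pow_val_neg x hx, pow_val_nsmul x hx, zpow_negSucc]

lemma pow_val_sub_zsmul (x : G) (hx : x ^ p = 1) (N D : ℤ) (a b : ZMod p) :
    x ^ ((N • a - D • b).val) = (x ^ a.val) ^ N * ((x ^ b.val) ^ D)⁻¹ := by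
  rw [sub_eq_add_neg, pow_val_add x hx, pow_val_neg x hx, pow_val_zsmul x hx,
    pow_val_zsmul x hx]
end Aux

/-- Correctness of the inter-transactions rate proof: with
`c = c₁^N · c₂^{-D}` and `τ = τ₁^N · τ₂^{-D}` built from commitments and tokens
over transaction subsets `S₁, S₂`, if `N·(∑_{S₁} v) = D·(∑_{S₂} v)` then
`c = h^{NΣr₁ - DΣr₂}` and `τ = c^{sk}`. -/
theorem inter_transactions_rate_correct
    {G : Type*} [CommGroup G] (p : ℕ) [Fact p.Prime]
    (g h : G) (hexp : ∀ x : G, x ^ p = 1)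
    (sk : ZMod p) (pk : G) (hpk : pk = h ^ sk.val)
    {ι : Type*} (S₁ S₂ : Finset ι) (v r : ι → ZMod p)
    (N D : ℤ)
    (hrate : N • (∑ t ∈ S₁, v t) = D • (∑ t ∈ S₂, v t))
    (c τ : G)
    (hc : c = (∏ t ∈ S₁, (g ^ (v t).val * h ^ (r t).val)) ^ N
            * ((∏ t ∈ S₂, (g ^ (v t).val * h ^ (r t).val)) ^ D)⁻¹)
    (hτ : τ = (∏ t ∈ S₁, pk ^ (r t).val) ^ N
            * ((∏ t ∈ S₂, pk ^ (r t).val) ^ D)⁻¹) :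
    c = h ^ (N • (∑ t ∈ S₁, r t) - D • (∑ t ∈ S₂, r t)).val ∧ τ = c ^ sk.val := by
  have hg := hexp g
  have hh := hexp h
  have hpkp := hexp pk
  have hc1 : ∀ (S : Finset ι), ∏ t ∈ S, (g ^ (v t).val * h ^ (r t).val)
      = g ^ (∑ t ∈ S, v t).val * h ^ (∑ t ∈ S, r t).val := by
    intro S
    rw [Finset.prod_mul_distrib, pow_val_sum g hg, pow_val_sum h hh]
  have hzero : N • (∑ t ∈ S₁, v t) - D • (∑ t ∈ S₂, v t) = 0 := sub_eq_zero.mpr hrate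
  have hcfinal : c = h ^ (N • (∑ t ∈ S₁, r t) - D • (∑ t ∈ S₂, r t)).val := by
    have hzg : (g ^ (∑ t ∈ S₁, v t).val) ^ N * ((g ^ (∑ t ∈ S₂, v t).val) ^ D)⁻¹ = 1 := by
      rw [← pow_val_sub_zsmul g hg, hzero]
      simp
    rw [hc, hc1, hc1, pow_val_sub_zsmul h hh N D]
    simp only [mul_zpow, mul_inv_rev]
    rw [mul_comm ((h ^ (∑ t ∈ S₂, r t).val) ^ D)⁻¹, mul_mul_mul_comm, hzg, one_mul]
  refine ⟨hcfinal, ?_⟩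
  have hτfinal : τ = pk ^ (N • (∑ t ∈ S₁, r t) - D • (∑ t ∈ S₂, r t)).val := by
    rw [hτ, ← pow_val_sum pk hpkp, ← pow_val_sum pk hpkp, ← pow_val_sub_zsmul pk hpkp]
  rw [hτfinal, hcfinal, hpk, ← pow_mul, ← pow_mul, Nat.mul_comm]
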